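/- arXiv:1610.10009 — 2 statements merged into one kernel-verified Lean document; each statement's English description precedes it below -/
import Mathlib

section
/- Let μ > −1/2 and define D_μ(x,y,z) = (2^{μ−1}(xyz)^{−μ+1/2} / (Γ(μ+1/2)√π)) · A(x,y,z)^{2μ−1} when |x−y| < z < x+y, and D_μ(x,y,z) = 0 otherwise, where A(x,y,z) = (1/4)√((x+y)²−z²)·√(z²−(x−y)²). Then for all x,y > 0: ∫₀^∞ z^{μ+1/2} D_μ(x,y,z) dz = (xy)^{μ+1/2} / (2^μ Γ(μ+1)). -/
open MeasureTheory Set Real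

lemma realBeta_integrable {s t : ℝ} (hs : 0 < s) (ht : 0 < t) :
    IntegrableOn (fun u : ℝ => u ^ (s-1) * (1-u) ^ (t-1)) (Ioo (0:ℝ) 1) := by
  have hC : IntegrableOn (fun u : ℝ => (u:ℂ) ^ ((s:ℂ)-1) * (1-(u:ℂ)) ^ ((t:ℂ)-1))
      (Ioc (0:ℝ) 1) := by
    have := Complex.betaIntegral_convergent (u := (s:ℂ)) (v := (t:ℂ)) (by simpa) (by simpa)
    simpa [intervalIntegrable_iff, uIoc_of_le (zero_le_one (α := ℝ))] using this
  have hC' := (hC.mono_set Ioo_subset_Ioc_self).re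
  refine IntegrableOn.congr_fun hC' (fun u hu => ?_) measurableSet_Ioo
  obtain ⟨hu0, hu1⟩ := hu
  have h1 : (u:ℂ) ^ ((s:ℂ)-1) = ((u ^ (s-1) : ℝ) : ℂ) := by
    rw [Complex.ofReal_cpow hu0.le]; push_cast; ring_nf
  have h2 : (1-(u:ℂ)) ^ ((t:ℂ)-1) = (((1-u) ^ (t-1) : ℝ) : ℂ) := by
    rw [show (1-(u:ℂ)) = (((1-u:ℝ)):ℂ) by push_cast; ring,
      Complex.ofReal_cpow (by linarith)]; push_cast; ring_nf
  simp [h1, h2, ← Complex.ofReal_mul]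

lemma realBeta_eval {s t : ℝ} (hs : 0 < s) (ht : 0 < t) :
    ∫ u in Ioo (0:ℝ) 1, u ^ (s-1) * (1-u) ^ (t-1)
      = Real.Gamma s * Real.Gamma t / Real.Gamma (s+t) := by
  have hst : (0:ℝ) < s + t := by linarith
  have hΓ : Real.Gamma (s+t) ≠ 0 := (Real.Gamma_pos_of_pos hst).ne'
  have hbeta := Complex.Gamma_mul_Gamma_eq_betaIntegral (s := (s:ℂ)) (t := (t:ℂ))
    (by simpa) (by simpa)
  have hB : Complex.betaIntegral (s:ℂ) (t:ℂ)
      = ((Real.Gamma s * Real.Gamma t / Real.Gamma (s+t) : ℝ) : ℂ) := by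
    have hΓC : Complex.Gamma ((s:ℂ) + (t:ℂ)) ≠ 0 := by
      rw [show (s:ℂ) + t = ((s+t:ℝ):ℂ) by push_cast; ring, Complex.Gamma_ofReal]
      exact_mod_cast hΓ
    push_cast
    rw [eq_div_iff (show ((Real.Gamma (s+t) : ℝ) : ℂ) ≠ 0 by exact_mod_cast hΓ)]
    rw [show (s:ℂ)+t = ((s+t:ℝ):ℂ) by push_cast; ring] at hbeta
    rw [← Complex.Gamma_ofReal, ← Complex.Gamma_ofReal, ← Complex.Gamma_ofReal]
    linear_combination -hbeta
  have hIoo : Complex.betaIntegral (s:ℂ) (t:ℂ)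
      = ∫ u in Ioo (0:ℝ) 1, (u:ℂ) ^ ((s:ℂ)-1) * (1-(u:ℂ)) ^ ((t:ℂ)-1) := by
    rw [Complex.betaIntegral, intervalIntegral.integral_of_le zero_le_one,
      integral_Ioc_eq_integral_Ioo]
  have hcongr : ∫ u in Ioo (0:ℝ) 1, (u:ℂ) ^ ((s:ℂ)-1) * (1-(u:ℂ)) ^ ((t:ℂ)-1)
      = ((∫ u in Ioo (0:ℝ) 1, u ^ (s-1) * (1-u) ^ (t-1) : ℝ) : ℂ) := by
    rw [setIntegral_congr_fun measurableSet_Ioo (g := fun u : ℝ =>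
        ((u ^ (s-1) * (1-u) ^ (t-1) : ℝ) : ℂ)) (fun u hu => ?_)]
    · exact integral_ofReal
    obtain ⟨hu0, hu1⟩ := hu
    have h1 : (u:ℂ) ^ ((s:ℂ)-1) = ((u ^ (s-1) : ℝ) : ℂ) := by
      rw [Complex.ofReal_cpow hu0.le]; push_cast; ring_nf
    have h2 : (1-(u:ℂ)) ^ ((t:ℂ)-1) = (((1-u) ^ (t-1) : ℝ) : ℂ) := by
      rw [show (1-(u:ℂ)) = (((1-u:ℝ)):ℂ) by push_cast; ring,
        Complex.ofReal_cpow (by linarith)]; push_cast; ring_nf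
    rw [h1, h2]
    norm_num
  have := hIoo.symm.trans hB
  rw [hcongr] at this
  exact_mod_cast this

lemma micro_div (a b e g s c : ℝ) (hg : g ≠ 0) (hs : s ≠ 0) (hc : c ≠ 0) :
    a / (g * s) * b * e * (g * g / c) = a * b * e * (g / (s * c)) := by
  field_simp

lemma final_arith (μ p : ℝ) (hμ : -(1/2 : ℝ) < μ) (hp : 0 < p) :
    (2 ^ (μ-1) * p ^ (-μ+1/2) * (1/4:ℝ) ^ (2*μ-1) / (Real.Gamma (μ+1/2) * Real.sqrt π))
      * (2*p) * ((16*p^2) ^ (μ-1/2))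
      * (Real.Gamma (μ+1/2) * Real.Gamma (μ+1/2) / Real.Gamma (2*μ+1))
    = p ^ (μ+1/2) / (2 ^ μ * Real.Gamma (μ+1)) := by
  have hG : 0 < Real.Gamma (μ+1/2) := Real.Gamma_pos_of_pos (by linarith)
  have hG1 : 0 < Real.Gamma (μ+1) := Real.Gamma_pos_of_pos (by linarith)
  have hG2 : 0 < Real.Gamma (2*μ+1) := Real.Gamma_pos_of_pos (by linarith)
  have hπ : 0 < Real.sqrt π := Real.sqrt_pos.mpr pi_pos
  have hdup := Real.Gamma_mul_Gamma_add_half (μ+1/2)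
  rw [show μ+1/2+1/2 = μ+1 by ring, show 2*(μ+1/2) = 2*μ+1 by ring,
    show 1-(2*μ+1) = -(2*μ) by ring] at hdup
  have e1 : (1/4:ℝ) ^ (2*μ-1) = (2:ℝ) ^ (-(2*(2*μ-1)) : ℝ) := by
    rw [show (-(2*(2*μ-1)) : ℝ) = (-2 : ℝ) * (2*μ-1) by ring,
      Real.rpow_mul (by norm_num : (0:ℝ) ≤ 2),
      show ((2:ℝ) ^ (-2:ℝ)) = 1/4 by
        rw [show ((-2):ℝ) = ((-2 : ℤ) : ℝ) by norm_num, Real.rpow_intCast]; norm_num]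
  have e2 : ((16*p^2:ℝ)) ^ (μ-1/2) = (2:ℝ) ^ (4*(μ-1/2)) * p ^ (2*(μ-1/2)) := by
    rw [Real.mul_rpow (by norm_num) (by positivity),
      show (16:ℝ) = (2:ℝ) ^ (4:ℝ) by
        rw [show ((4):ℝ) = ((4 : ℕ) : ℝ) by norm_num, Real.rpow_natCast]; norm_num,
      ← Real.rpow_mul (by norm_num : (0:ℝ) ≤ 2),
      ← Real.rpow_natCast p 2, ← Real.rpow_mul hp.le]
    norm_num
  have h2c : (2:ℝ) ^ (μ-1) * (2:ℝ) ^ (-(2*(2*μ-1)):ℝ) * (2:ℝ) ^ (1:ℝ)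
      * (2:ℝ) ^ (4*(μ-1/2)) = (2:ℝ) ^ μ := by
    rw [← Real.rpow_add two_pos, ← Real.rpow_add two_pos, ← Real.rpow_add two_pos]
    congr 1; ring
  have hpc : p ^ (-μ+1/2) * p ^ (1:ℝ) * p ^ (2*(μ-1/2)) = p ^ (μ+1/2) := by
    rw [← Real.rpow_add hp, ← Real.rpow_add hp]
    congr 1; ring
  have h22 : (2:ℝ) ^ μ * (2:ℝ) ^ μ = (2:ℝ) ^ (2*μ) := by
    rw [← Real.rpow_add two_pos]; congr 1; ring
  have hcc : (2:ℝ) ^ (2*μ) * (2:ℝ) ^ (-(2*μ):ℝ) = 1 := by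
    rw [← Real.rpow_add two_pos]; norm_num
  have hkey : (2:ℝ) ^ μ * (Real.Gamma (μ+1/2) / (Real.sqrt π * Real.Gamma (2*μ+1)))
      = 1 / ((2:ℝ) ^ μ * Real.Gamma (μ+1)) := by
    rw [mul_div_assoc', div_eq_div_iff (by positivity) (by positivity)]
    linear_combination Real.Gamma (μ+1/2) * Real.Gamma (μ+1) * h22
      + (2:ℝ) ^ (2*μ) * hdup + Real.sqrt π * Real.Gamma (2*μ+1) * hcc
  calc (2 ^ (μ-1) * p ^ (-μ+1/2) * (1/4:ℝ) ^ (2*μ-1) / (Real.Gamma (μ+1/2) * Real.sqrt π))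
      * (2*p) * ((16*p^2) ^ (μ-1/2))
      * (Real.Gamma (μ+1/2) * Real.Gamma (μ+1/2) / Real.Gamma (2*μ+1))
      = (2 ^ (μ-1) * p ^ (-μ+1/2) * (1/4:ℝ) ^ (2*μ-1)) * (2*p) * ((16*p^2) ^ (μ-1/2))
        * (Real.Gamma (μ+1/2) / (Real.sqrt π * Real.Gamma (2*μ+1))) :=
        micro_div _ _ _ _ _ _ hG.ne' hπ.ne' hG2.ne'
    _ = ((2:ℝ) ^ (μ-1) * (2:ℝ) ^ (-(2*(2*μ-1)):ℝ) * (2:ℝ) ^ (1:ℝ) * (2:ℝ) ^ (4*(μ-1/2)))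
        * (p ^ (-μ+1/2) * p ^ (1:ℝ) * p ^ (2*(μ-1/2)))
        * (Real.Gamma (μ+1/2) / (Real.sqrt π * Real.Gamma (2*μ+1))) := by
        rw [e1, e2, Real.rpow_one, Real.rpow_one]
        ring
    _ = (2:ℝ) ^ μ * p ^ (μ+1/2)
        * (Real.Gamma (μ+1/2) / (Real.sqrt π * Real.Gamma (2*μ+1))) := by rw [h2c, hpc]
    _ = p ^ (μ+1/2) * ((2:ℝ) ^ μ
        * (Real.Gamma (μ+1/2) / (Real.sqrt π * Real.Gamma (2*μ+1)))) := by ring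
    _ = p ^ (μ+1/2) / (2 ^ μ * Real.Gamma (μ+1)) := by rw [hkey]; ring

/-- Area of the triangle with sides `x, y, z`. -/
noncomputable def triA (x y z : ℝ) : ℝ :=
  (1/4) * Real.sqrt (((x + y) ^ 2 - z ^ 2) * (z ^ 2 - (x - y) ^ 2))

/-- The Delsarte–Hankel translation kernel `D_μ`. -/
noncomputable def Dker (μ x y z : ℝ) : ℝ :=
  if |x - y| < z ∧ z < x + y then
    (2 ^ (μ - 1) * (x * y * z) ^ (-μ + 1/2) / (Real.Gamma (μ + 1/2) * Real.sqrt Real.pi)) *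
      triA x y z ^ (2 * μ - 1)
  else 0

/-- `∫₀^∞ z^{μ+1/2} D_μ(x,y,z) dz = (xy)^{μ+1/2} / (2^μ Γ(μ+1))`. -/
theorem stmt5 (μ : ℝ) (hμ : -(1/2 : ℝ) < μ) (x y : ℝ) (hx : 0 < x) (hy : 0 < y) :
    IntegrableOn (fun z => z ^ (μ + 1/2) * Dker μ x y z) (Ioi (0:ℝ)) ∧
      ∫ z in Ioi (0:ℝ), z ^ (μ + 1/2) * Dker μ x y z =
        (x * y) ^ (μ + 1/2) / (2 ^ μ * Real.Gamma (μ + 1)) := by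
  set a := (x-y)^2 with ha_def
  set b := (x+y)^2 with hb_def
  set p := x*y with hp_def
  have hp : 0 < p := mul_pos hx hy
  have hba : b = a + 4*p := by rw [ha_def, hb_def, hp_def]; ring
  have hxy0 : (0:ℝ) ≤ |x-y| := abs_nonneg _
  have ha0 : (0:ℝ) ≤ a := sq_nonneg _
  have hsqa : Real.sqrt a = |x-y| := Real.sqrt_sq_eq_abs _
  have hsqb : Real.sqrt b = x+y := Real.sqrt_sq (by linarith)
  set S := Ioo (|x-y|) (x+y) with hS_def
  have hS_sub : S ⊆ Ioi (0:ℝ) := fun z hz => lt_of_le_of_lt hxy0 hz.1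
  have hmeasS : MeasurableSet S := measurableSet_Ioo
  have hG : 0 < Real.Gamma (μ+1/2) := Real.Gamma_pos_of_pos (by linarith)
  have hπ : 0 < Real.sqrt π := Real.sqrt_pos.mpr pi_pos
  set c1 := 2 ^ (μ-1) * p ^ (-μ+1/2) * (1/4:ℝ) ^ (2*μ-1)
    / (Real.Gamma (μ+1/2) * Real.sqrt π) with hc1
  set F : ℝ → ℝ := fun z => c1 * (z * ((b - z^2) * (z^2 - a)) ^ (μ - 1/2)) with hF
  -- Step 1: the integrand equals the indicator of S applied to F, on Ioi 0
  have key1 : EqOn (fun z => z ^ (μ + 1/2) * Dker μ x y z) (S.indicator F) (Ioi (0:ℝ)) := by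
    intro z hz
    have hz0 : (0:ℝ) < z := hz
    by_cases hzS : z ∈ S
    · have h1 : |x - y| < z := hzS.1
      have h2 : z < x + y := hzS.2
      rw [indicator_of_mem hzS]
      show z ^ (μ + 1/2) * Dker μ x y z = F z
      rw [Dker, if_pos ⟨h1, h2⟩]
      have hPl : a < z^2 := by
        rw [ha_def, ← sq_abs (x-y)]
        exact pow_lt_pow_left₀ h1 hxy0 two_ne_zero
      have hPr : z^2 < b := by
        rw [hb_def]
        exact pow_lt_pow_left₀ h2 hz0.le two_ne_zero
      have hP : 0 < (b - z^2) * (z^2 - a) := mul_pos (by linarith) (by linarith)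
      have htri : triA x y z ^ (2*μ-1)
          = (1/4:ℝ) ^ (2*μ-1) * ((b - z^2)*(z^2 - a)) ^ (μ-1/2) := by
        rw [triA, ← hb_def, ← ha_def,
          Real.mul_rpow (by norm_num) (Real.sqrt_nonneg _),
          Real.sqrt_eq_rpow, ← Real.rpow_mul hP.le]
        congr 2
        ring
      have hzz : z ^ (μ+1/2) * (p*z) ^ (-μ+1/2) = p ^ (-μ+1/2) * z :=
        calc z ^ (μ+1/2) * (p*z) ^ (-μ+1/2)
            = p ^ (-μ+1/2) * (z ^ (μ+1/2) * z ^ (-μ+1/2)) := by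
              rw [Real.mul_rpow hp.le hz0.le]; ring
          _ = p ^ (-μ+1/2) * z := by
              rw [← Real.rpow_add hz0, show μ+1/2+(-μ+1/2) = (1:ℝ) by ring, Real.rpow_one]
      calc z ^ (μ + 1/2) * (2 ^ (μ - 1) * (x * y * z) ^ (-μ + 1/2)
            / (Real.Gamma (μ + 1/2) * Real.sqrt π) * triA x y z ^ (2 * μ - 1))
          = (z ^ (μ+1/2) * (p*z) ^ (-μ+1/2)) * (2 ^ (μ-1)
            * ((1/4:ℝ) ^ (2*μ-1) * ((b - z^2)*(z^2 - a)) ^ (μ-1/2))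
            / (Real.Gamma (μ+1/2) * Real.sqrt π)) := by
            rw [htri, hp_def]; ring
        _ = (p ^ (-μ+1/2) * z) * (2 ^ (μ-1)
            * ((1/4:ℝ) ^ (2*μ-1) * ((b - z^2)*(z^2 - a)) ^ (μ-1/2))
            / (Real.Gamma (μ+1/2) * Real.sqrt π)) := by rw [hzz]
        _ = F z := by rw [hF, hc1]; ring
    · rw [indicator_of_notMem hzS]
      show z ^ (μ + 1/2) * Dker μ x y z = 0
      rw [Dker, if_neg (fun h => hzS (mem_Ioo.mpr h)), mul_zero]
  -- Step 2: reduce Ioi 0 to S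
  have hre1 : IntegrableOn (fun z => z ^ (μ + 1/2) * Dker μ x y z) (Ioi (0:ℝ))
      ↔ IntegrableOn F S := by
    rw [integrableOn_congr_fun key1 measurableSet_Ioi, IntegrableOn,
      integrable_indicator_iff hmeasS, IntegrableOn, IntegrableOn,
      Measure.restrict_restrict hmeasS, inter_eq_self_of_subset_left hS_sub]
  have hieq : ∫ z in Ioi (0:ℝ), z ^ (μ + 1/2) * Dker μ x y z = ∫ z in S, F z := by
    rw [setIntegral_congr_fun measurableSet_Ioi key1, setIntegral_indicator hmeasS,
      inter_eq_self_of_subset_right hS_sub]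
  -- Step 3: change of variables z = sqrt (a + 4 p t)
  set g : ℝ → ℝ := fun t => Real.sqrt (a + 4*p*t) with hg
  have hu_pos : ∀ t ∈ Ioo (0:ℝ) 1, 0 < a + 4*p*t := by
    intro t ht; nlinarith [ht.1, ha0, hp]
  have hderiv : ∀ t ∈ Ioo (0:ℝ) 1,
      HasDerivWithinAt g (2*p / Real.sqrt (a+4*p*t)) (Ioo (0:ℝ) 1) t := by
    intro t ht
    have h0 := hu_pos t ht
    have hs0 : Real.sqrt (a+4*p*t) ≠ 0 := (Real.sqrt_pos.mpr h0).ne'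
    have hinner : HasDerivAt (fun t : ℝ => a + 4*p*t) (4*p) t := by
      simpa using ((hasDerivAt_id t).const_mul (4*p)).const_add a
    have hcomp := (Real.hasDerivAt_sqrt h0.ne').comp t hinner
    have : 1 / (2 * Real.sqrt (a+4*p*t)) * (4*p) = 2*p / Real.sqrt (a+4*p*t) := by
      field_simp; ring
    rw [← this]
    exact hcomp.hasDerivWithinAt
  have hinj : InjOn g (Ioo (0:ℝ) 1) := by
    apply StrictMonoOn.injOn
    intro t1 h1 t2 h2 hlt
    exact Real.sqrt_lt_sqrt (by nlinarith [h1.1, ha0, hp.le]) (by nlinarith)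
  have himg : g '' Ioo (0:ℝ) 1 = S := by
    ext z
    constructor
    · rintro ⟨t, ⟨ht0, ht1⟩, rfl⟩
      constructor
      · rw [← hsqa]; exact Real.sqrt_lt_sqrt ha0 (by nlinarith)
      · rw [← hsqb, hba]; exact Real.sqrt_lt_sqrt (by nlinarith) (by nlinarith)
    · intro hz
      obtain ⟨h1, h2⟩ := hz
      have hz0 : 0 < z := lt_of_le_of_lt hxy0 h1
      have hPl : a < z^2 := by
        rw [ha_def, ← sq_abs (x-y)]
        exact pow_lt_pow_left₀ h1 hxy0 two_ne_zero
      have hPr : z^2 < b := by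
        rw [hb_def]
        exact pow_lt_pow_left₀ h2 hz0.le two_ne_zero
      refine ⟨(z^2 - a)/(4*p), ⟨div_pos (by linarith) (by linarith),
        (div_lt_one (by linarith)).mpr (by rw [hba] at hPr; linarith)⟩, ?_⟩
      show Real.sqrt (a + 4*p*((z^2-a)/(4*p))) = z
      rw [show a + 4*p*((z^2-a)/(4*p)) = z^2 by field_simp; ring]
      exact Real.sqrt_sq hz0.le
  have hiff := integrableOn_image_iff_integrableOn_abs_deriv_smul
    measurableSet_Ioo hderiv hinj F
  rw [himg] at hiff
  have hint := integral_image_eq_integral_abs_deriv_smul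
    measurableSet_Ioo hderiv hinj F
  rw [himg] at hint
  -- Step 4: pointwise simplification of the substituted integrand
  set c2 := c1 * (2*p) * ((16*p^2) ^ (μ-1/2)) with hc2
  have hpt : ∀ t ∈ Ioo (0:ℝ) 1,
      |2*p / Real.sqrt (a+4*p*t)| • F (g t)
      = c2 * (t ^ (μ-1/2) * (1-t) ^ (μ-1/2)) := by
    intro t ht
    obtain ⟨ht0, ht1⟩ := ht
    have h0 : 0 < a + 4*p*t := hu_pos t ⟨ht0, ht1⟩
    have hs0 : 0 < Real.sqrt (a+4*p*t) := Real.sqrt_pos.mpr h0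
    have hsq : Real.sqrt (a+4*p*t) ^ 2 = a + 4*p*t := Real.sq_sqrt h0.le
    rw [abs_of_pos (by positivity), smul_eq_mul]
    show 2*p / Real.sqrt (a+4*p*t) * (c1 * (Real.sqrt (a+4*p*t)
      * ((b - Real.sqrt (a+4*p*t)^2) * (Real.sqrt (a+4*p*t)^2 - a)) ^ (μ-1/2))) = _
    rw [hsq, show b - (a + 4*p*t) = 4*p*(1-t) by rw [hba]; ring,
      show a + 4*p*t - a = 4*p*t by ring]
    have hmm : (4*p*(1-t) * (4*p*t)) ^ (μ-1/2)
        = (16*p^2) ^ (μ-1/2) * (t ^ (μ-1/2) * (1-t) ^ (μ-1/2)) := by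
      rw [show 4*p*(1-t)*(4*p*t) = (16*p^2)*(t*(1-t)) by ring,
        Real.mul_rpow (by positivity) (mul_nonneg ht0.le (by linarith)),
        Real.mul_rpow ht0.le (by linarith)]
    rw [hmm, hc2]
    field_simp
  -- Step 5: Beta integral
  have hs : (0:ℝ) < μ + 1/2 := by linarith
  have hbetaInt := realBeta_integrable hs hs
  rw [show μ+1/2-1 = μ-1/2 by ring] at hbetaInt
  have hbetaVal := realBeta_eval hs hs
  rw [show μ+1/2-1 = μ-1/2 by ring, show μ+1/2+(μ+1/2) = 2*μ+1 by ring] at hbetaVal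
  have hIright : IntegrableOn (fun t => |2*p / Real.sqrt (a+4*p*t)| • F (g t))
      (Ioo (0:ℝ) 1) := by
    refine IntegrableOn.congr_fun (hbetaInt.const_mul c2) (fun t ht => ?_) measurableSet_Ioo
    exact (hpt t ht).symm
  have hIvalue : ∫ t in Ioo (0:ℝ) 1, |2*p / Real.sqrt (a+4*p*t)| • F (g t)
      = c2 * (Real.Gamma (μ+1/2) * Real.Gamma (μ+1/2) / Real.Gamma (2*μ+1)) := by
    rw [setIntegral_congr_fun measurableSet_Ioo hpt, MeasureTheory.integral_const_mul, hbetaVal]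
  constructor
  · exact hre1.mpr (hiff.mpr hIright)
  · rw [hieq, hint, hIvalue, hc2, hc1]
    exact final_arith μ p hμ hp
end

section
/- Let μ > −1/2, r(x)=x^{−μ−1/2}, s(x)=x^{2μ+1}/c_μ, and let D_μ be the Hankel convolution kernel. If f ∈ L¹(sr) and g ∈ L^∞(r), then for every x ∈ (0,∞) the double integral (f♯g)(x) = ∫₀^∞∫₀^∞ D_μ(x,y,z) f(y) g(z) dy dz converges absolutely, f♯g ∈ L^∞(r), and ‖f♯g‖_{L^∞(r)} ≤ ‖f‖_{L¹(sr)} ‖g‖_{L^∞(r)}. -/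
open MeasureTheory Set Real

lemma betaCongr {p : ℝ} : ∀ t ∈ Ioo (0:ℝ) 1,
    ((t:ℂ)) ^ ((p:ℂ)) * (1 - (t:ℂ)) ^ ((p:ℂ)) = ((t ^ p * (1 - t) ^ p : ℝ) : ℂ) := by
  intro t ht
  have e1 : ((1:ℂ) - t) = ((1 - t : ℝ) : ℂ) := by push_cast; ring
  rw [e1, ← Complex.ofReal_cpow ht.1.le, ← Complex.ofReal_cpow (by linarith [ht.2]),
    Complex.ofReal_mul]

lemma betaReal_integrable {p : ℝ} (hp : -1 < p) :
    IntegrableOn (fun t : ℝ => t ^ p * (1 - t) ^ p) (Ioo 0 1) := by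
  have h := Complex.betaIntegral_convergent (u := (p:ℂ) + 1) (v := (p:ℂ) + 1)
    (by simp; linarith) (by simp; linarith)
  have h1 : IntegrableOn (fun t : ℝ => ((t:ℂ)) ^ ((p:ℂ)) * (1 - (t:ℂ)) ^ ((p:ℂ)))
      (Ioo (0:ℝ) 1) := by
    refine IntegrableOn.mono_set ?_ Ioo_subset_Ioc_self
    simpa using h.1
  have h2 := (h1.congr_fun betaCongr measurableSet_Ioo).re
  simpa [IntegrableOn] using h2

lemma betaReal_eq {p : ℝ} (hp : -1 < p) :
    ∫ t in Ioo (0:ℝ) 1, t ^ p * (1 - t) ^ p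
      = Real.Gamma (p+1) ^ 2 / Real.Gamma (2*p+2) := by
  have hre : (0:ℝ) < Complex.re ((p:ℂ)+1) := by simp; linarith
  have h := Complex.Gamma_mul_Gamma_eq_betaIntegral hre hre
  have hBI : Complex.betaIntegral ((p:ℂ)+1) ((p:ℂ)+1)
      = ((∫ t in Ioo (0:ℝ) 1, t ^ p * (1 - t) ^ p : ℝ) : ℂ) := by
    rw [Complex.betaIntegral]
    rw [intervalIntegral.integral_of_le zero_le_one]
    simp only [add_sub_cancel_right]
    rw [MeasureTheory.integral_Ioc_eq_integral_Ioo]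
    rw [setIntegral_congr_fun measurableSet_Ioo (g := fun t : ℝ => ((t ^ p * (1 - t) ^ p : ℝ) : ℂ))
      (fun t ht => betaCongr t ht)]
    exact integral_ofReal
  rw [hBI] at h
  have hG2 : Complex.Gamma ((p:ℂ)+1+((p:ℂ)+1)) = ((Real.Gamma (2*p+2) : ℝ) : ℂ) := by
    rw [show (p:ℂ)+1+((p:ℂ)+1) = ((2*p+2 : ℝ) : ℂ) by push_cast; ring, Complex.Gamma_ofReal]
  have hG1 : Complex.Gamma ((p:ℂ)+1) = ((Real.Gamma (p+1) : ℝ) : ℂ) := by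
    rw [show (p:ℂ)+1 = ((p+1 : ℝ) : ℂ) by push_cast; ring, Complex.Gamma_ofReal]
  rw [hG1, hG2] at h
  have hGpos : 0 < Real.Gamma (2*p+2) := Real.Gamma_pos_of_pos (by linarith)
  have h' : Real.Gamma (p+1) * Real.Gamma (p+1)
      = Real.Gamma (2*p+2) * ∫ t in Ioo (0:ℝ) 1, t ^ p * (1 - t) ^ p := by
    exact_mod_cast h
  rw [sq]
  rw [eq_div_iff hGpos.ne', h']; ring

lemma affine_image (a b : ℝ) (hab : a < b) :
    (fun t : ℝ => a + (b - a) * t) '' Ioo 0 1 = Ioo a b := by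
  ext u
  constructor
  · rintro ⟨t, ht, rfl⟩
    have h1 := mul_pos (sub_pos.mpr hab) ht.1
    have h2 := mul_lt_mul_of_pos_left ht.2 (sub_pos.mpr hab)
    constructor <;> simp <;> nlinarith
  · rintro ⟨h1, h2⟩
    refine ⟨(u - a) / (b - a), ⟨div_pos (by linarith) (by linarith),
      by rw [div_lt_one (by linarith)]; linarith⟩, ?_⟩
    show a + (b - a) * ((u - a) / (b - a)) = u
    rw [mul_div_cancel₀ _ (by linarith : b - a ≠ 0)]; ring

lemma affine_step {p : ℝ} (hp : -1 < p) (a b : ℝ) (hab : a < b) :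
    IntegrableOn (fun u : ℝ => ((b - u) * (u - a)) ^ p) (Ioo a b) ∧
    ∫ u in Ioo a b, ((b - u) * (u - a)) ^ p
      = (b - a) ^ (2*p+1) * ∫ t in Ioo (0:ℝ) 1, t ^ p * (1 - t) ^ p := by
  have hd : ∀ t ∈ Ioo (0:ℝ) 1, HasDerivWithinAt (fun t : ℝ => a + (b - a) * t) (b - a) (Ioo 0 1) t :=
    fun t _ => by simpa using (((hasDerivAt_id t).const_mul (b-a)).const_add a).hasDerivWithinAt
  have hinj : InjOn (fun t : ℝ => a + (b - a) * t) (Ioo 0 1) := fun s _ t _ h => by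
    simp only at h
    exact mul_left_cancel₀ (sub_ne_zero.mpr hab.ne') (add_left_cancel h)
  have hba : (0:ℝ) < b - a := by linarith
  have key : ∀ t ∈ Ioo (0:ℝ) 1,
      |b - a| • ((b - (a + (b - a) * t)) * ((a + (b - a) * t) - a)) ^ p
        = (b - a) ^ (2*p+1) * (t ^ p * (1 - t) ^ p) := by
    intro t ht
    have e1 : (b - (a + (b - a) * t)) * ((a + (b - a) * t) - a) = (b-a)^2 * ((1 - t) * t) := by
      ring
    rw [smul_eq_mul, abs_of_pos hba, e1,
      Real.mul_rpow (by positivity) (mul_nonneg (by linarith [ht.2]) ht.1.le),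
      Real.mul_rpow (by linarith [ht.2]) ht.1.le,
      ← Real.rpow_natCast (b-a) 2, ← Real.rpow_mul hba.le,
      show ((2:ℕ):ℝ) * p = 2*p from by norm_num,
      Real.rpow_add hba (2*p) 1, Real.rpow_one]
    ring
  constructor
  · rw [← affine_image a b hab,
      integrableOn_image_iff_integrableOn_abs_deriv_smul measurableSet_Ioo hd hinj]
    exact IntegrableOn.congr_fun ((betaReal_integrable hp).const_mul ((b-a)^(2*p+1)))
      (fun t ht => (key t ht).symm) measurableSet_Ioo
  · rw [← affine_image a b hab,
      integral_image_eq_integral_abs_deriv_smul measurableSet_Ioo hd hinj,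
      setIntegral_congr_fun measurableSet_Ioo (g := fun t =>
        (b - a) ^ (2*p+1) * (t ^ p * (1 - t) ^ p)) (fun t ht => key t ht),
      integral_const_mul]

lemma sq_image (c d : ℝ) (hc : 0 ≤ c) (hcd : c < d) :
    (fun z : ℝ => z ^ 2) '' Ioo c d = Ioo (c^2) (d^2) := by
  ext u
  constructor
  · rintro ⟨z, hz, rfl⟩
    simp only [mem_Ioo]
    exact ⟨by nlinarith [mul_pos (sub_pos.mpr hz.1) (show (0:ℝ) < z + c by linarith [hz.1])],
      by nlinarith [mul_pos (sub_pos.mpr hz.2) (show (0:ℝ) < d + z by linarith [hz.1])]⟩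
  · rintro ⟨h1, h2⟩
    have hu : 0 ≤ u := le_trans (by positivity) h1.le
    refine ⟨Real.sqrt u, ⟨?_, ?_⟩, Real.sq_sqrt hu⟩
    · have := Real.sqrt_lt_sqrt (by positivity) h1
      rwa [Real.sqrt_sq hc] at this
    · have := Real.sqrt_lt_sqrt hu h2
      rwa [Real.sqrt_sq (le_trans hc hcd.le)] at this

set_option maxHeartbeats 1000000 in
lemma kerInt (μ : ℝ) (hμ : -(1/2:ℝ) < μ) (x y : ℝ) (hx : 0 < x) (hy : 0 < y) :
    IntegrableOn (fun z => z ^ (μ+1/2) * Dker μ x y z) (Ioi 0) ∧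
    ∫ z in Ioi (0:ℝ), z ^ (μ+1/2) * Dker μ x y z
      = (x*y) ^ (μ+1/2) / (2 ^ μ * Real.Gamma (μ+1)) := by
  set c : ℝ := |x - y| with hcdef
  set d : ℝ := x + y with hddef
  have hc0 : 0 ≤ c := abs_nonneg _
  have hcd : c < d := abs_sub_lt_iff.mpr ⟨by linarith, by linarith⟩
  have hd0 : 0 < d := by linarith
  set p : ℝ := μ - 1/2 with hpdef
  have hp : -1 < p := by simp [hpdef]; linarith
  set K : ℝ := 2 ^ (μ - 1) / (Real.Gamma (μ + 1/2) * Real.sqrt Real.pi)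
      * (x*y) ^ (-μ + 1/2) * (1/4 : ℝ) ^ (2*μ-1) with hKdef
  set W : ℝ → ℝ := fun z => (d^2 - z^2) * (z^2 - c^2) with hWdef
  -- pointwise identity on `Ioo c d`
  have hWpos : ∀ z ∈ Ioo c d, 0 < W z := by
    intro z hz
    have hz0 : 0 < z := lt_of_le_of_lt hc0 hz.1
    have h1 : z^2 < d^2 := by nlinarith [hz.2]
    have h2 : c^2 < z^2 := by nlinarith [hz.1]
    simp only [hWdef]
    nlinarith
  have hpt : ∀ z ∈ Ioo c d,
      z ^ (μ+1/2) * Dker μ x y z = K * (z * (W z) ^ p) := by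
    intro z hz
    have hz0 : 0 < z := lt_of_le_of_lt hc0 hz.1
    have hW := hWpos z hz
    rw [Dker, if_pos ⟨hz.1, hz.2⟩]
    have htri : triA x y z = (1/4) * (W z) ^ (1/2 : ℝ) := by
      rw [triA, Real.sqrt_eq_rpow]
      congr 2
      rw [hWdef]
      simp only [hddef, hcdef, sq_abs]
    rw [htri, Real.mul_rpow (by norm_num) (Real.rpow_nonneg hW.le _),
      ← Real.rpow_mul hW.le]
    have he : (1/2 : ℝ) * (2*μ - 1) = p := by simp [hpdef]; ring
    rw [he]
    have hxyz : (x * y * z) ^ (-μ + 1/2) = (x*y) ^ (-μ + 1/2) * z ^ (-μ + 1/2) :=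
      Real.mul_rpow (by positivity) hz0.le
    rw [hxyz]
    have hz1 : z ^ (μ+1/2) * z ^ (-μ+1/2) = z := by
      rw [← Real.rpow_add hz0, show μ+1/2+(-μ+1/2) = (1:ℝ) by ring, Real.rpow_one]
    calc z ^ (μ+1/2) * (2 ^ (μ - 1) * ((x*y) ^ (-μ + 1/2) * z ^ (-μ + 1/2))
          / (Real.Gamma (μ + 1/2) * Real.sqrt Real.pi) * ((1/4:ℝ) ^ (2*μ-1) * W z ^ p))
        = (z ^ (μ+1/2) * z ^ (-μ+1/2)) * (2 ^ (μ - 1) / (Real.Gamma (μ + 1/2) * Real.sqrt Real.pi)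
            * (x*y) ^ (-μ + 1/2) * (1/4:ℝ) ^ (2*μ-1) * W z ^ p) := by ring
      _ = K * (z * (W z) ^ p) := by rw [hz1, hKdef]; ring
  have hfe : (fun z => z ^ (μ+1/2) * Dker μ x y z)
      = Set.indicator (Ioo c d) (fun z => K * (z * (W z) ^ p)) := by
    funext z
    by_cases hz : z ∈ Ioo c d
    · rw [Set.indicator_of_mem hz, hpt z hz]
    · rw [Set.indicator_of_notMem hz, Dker, if_neg (fun hcon => hz ⟨hcon.1, hcon.2⟩), mul_zero]
  have hd2 : c^2 < d^2 := by nlinarith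
  have hder : ∀ z ∈ Ioo c d, HasDerivWithinAt (fun z : ℝ => z^2) (2*z) (Ioo c d) z := by
    intro z _
    simpa using (hasDerivAt_pow 2 z).hasDerivWithinAt
  have hinj : InjOn (fun z : ℝ => z^2) (Ioo c d) := by
    intro a ha b hb h
    simp only at h
    have h0 : (a - b) * (a + b) = 0 := by nlinarith [h]
    rcases mul_eq_zero.mp h0 with h1 | h1
    · linarith
    · have : 0 < a := lt_of_le_of_lt hc0 ha.1
      have : 0 < b := lt_of_le_of_lt hc0 hb.1
      linarith
  have himg := sq_image c d hc0 hcd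
  set g : ℝ → ℝ := fun u => ((d^2 - u) * (u - c^2)) ^ p with hgdef
  have haff := affine_step hp (c^2) (d^2) hd2
  have habs : ∀ z ∈ Ioo c d, |2*z| • g (z^2) = 2 * (z * (W z) ^ p) := by
    intro z hz
    have hz0 : 0 < z := lt_of_le_of_lt hc0 hz.1
    rw [smul_eq_mul, abs_of_pos (by linarith : (0:ℝ) < 2*z)]
    show 2 * z * ((d^2 - z^2) * (z^2 - c^2)) ^ p = 2 * (z * ((d^2 - z^2) * (z^2 - c^2)) ^ p)
    ring
  have hIoo : IntegrableOn (fun z => |2*z| • g (z^2)) (Ioo c d) :=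
    (integrableOn_image_iff_integrableOn_abs_deriv_smul measurableSet_Ioo hder hinj g).mp
      (himg ▸ haff.1)
  have hIint : IntegrableOn (fun z => K * (z * (W z) ^ p)) (Ioo c d) := by
    refine IntegrableOn.congr_fun (hIoo.const_mul (K/2)) ?_ measurableSet_Ioo
    intro z hz
    show K / 2 * (|2*z| • g (z^2)) = K * (z * (W z) ^ p)
    rw [habs z hz]
    ring
  have hIoosub : Ioo c d ⊆ Ioi (0:ℝ) := fun z hz => lt_of_le_of_lt hc0 hz.1
  have hIfull : IntegrableOn (fun z => z ^ (μ+1/2) * Dker μ x y z) (Ioi 0) := by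
    rw [hfe, IntegrableOn, integrable_indicator_iff measurableSet_Ioo, IntegrableOn,
      Measure.restrict_restrict measurableSet_Ioo, inter_eq_self_of_subset_left hIoosub]
    exact hIint
  refine ⟨hIfull, ?_⟩
  rw [hfe, setIntegral_indicator measurableSet_Ioo, inter_eq_self_of_subset_right hIoosub,
    MeasureTheory.integral_const_mul]
  have hsq : ∫ z in Ioo c d, z * (W z) ^ p
      = (1/2) * ((d^2 - c^2) ^ (2*p+1) * ∫ t in Ioo (0:ℝ) 1, t ^ p * (1 - t) ^ p) := by
    have h1 : ∫ u in Ioo (c^2) (d^2), g u = ∫ z in Ioo c d, |2*z| • g (z^2) := by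
      rw [← himg]
      exact integral_image_eq_integral_abs_deriv_smul measurableSet_Ioo hder hinj g
    rw [setIntegral_congr_fun measurableSet_Ioo (fun z hz => habs z hz),
      MeasureTheory.integral_const_mul] at h1
    rw [← haff.2, h1]
    ring
  rw [hsq, betaReal_eq hp]
  -- now pure algebra with Gamma and rpow
  have hdc : d^2 - c^2 = 4*(x*y) := by
    rw [hddef, hcdef, sq_abs]
    ring
  have h2p : 2*p+1 = 2*μ := by rw [hpdef]; ring
  have hp1 : p + 1 = μ + 1/2 := by rw [hpdef]; ring
  have hp2 : 2*p+2 = 2*μ+1 := by rw [hpdef]; ring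
  rw [hdc, h2p, hp1, hp2, hKdef]
  have hxy : (0:ℝ) < x*y := by positivity
  have hG1 : 0 < Real.Gamma (μ + 1/2) := Real.Gamma_pos_of_pos (by linarith)
  have hG2 : 0 < Real.Gamma (μ + 1) := Real.Gamma_pos_of_pos (by linarith)
  have hG3 : 0 < Real.Gamma (2*μ + 1) := Real.Gamma_pos_of_pos (by linarith)
  have hπ : (0:ℝ) < Real.sqrt Real.pi := Real.sqrt_pos.mpr Real.pi_pos
  have hdup : Real.Gamma (μ+1/2) * Real.Gamma (μ+1)
      = Real.Gamma (2*μ+1) * (2:ℝ) ^ (-(2*μ)) * Real.sqrt Real.pi := by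
    have := Real.Gamma_mul_Gamma_add_half (μ + 1/2)
    rw [show μ+1/2+1/2 = μ+1 by ring, show 2*(μ+1/2) = 2*μ+1 by ring,
      show 1-(2*μ+1) = -(2*μ) by ring] at this
    exact this
  -- expand the powers
  have h2z : (2:ℝ) ^ (-(2*μ)) * (2:ℝ) ^ (2*μ) = 1 := by
    rw [← Real.rpow_add two_pos]; norm_num
  have hdup' : Real.sqrt Real.pi * Real.Gamma (2*μ+1)
      = Real.Gamma (μ+1/2) * Real.Gamma (μ+1) * (2:ℝ) ^ (2*μ) := by
    rw [hdup]
    linear_combination (-(Real.sqrt Real.pi * Real.Gamma (2*μ+1))) * h2z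
  have e1 : (4*(x*y)) ^ (2*μ) = (4:ℝ) ^ (2*μ) * (x*y) ^ (2*μ) :=
    Real.mul_rpow (by norm_num) hxy.le
  have e4 : (x*y) ^ (-μ+1/2) * (x*y) ^ (2*μ) = (x*y) ^ (μ+1/2) := by
    rw [← Real.rpow_add hxy]; congr 1; ring
  have h2two : (2:ℝ) ^ (2:ℝ) = 4 := by
    rw [show (2:ℝ) = ((2:ℕ):ℝ) from by norm_num, Real.rpow_natCast]
    norm_num
  have h14 : ((1:ℝ)/4) = (2:ℝ) ^ (-2:ℝ) := by
    rw [Real.rpow_neg (by norm_num : (0:ℝ) ≤ 2), h2two]; norm_num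
  have e5 : (2:ℝ)^(μ-1) * ((1:ℝ)/4) ^ (2*μ-1) * (4:ℝ) ^ (2*μ) = 2 * (2:ℝ)^μ := by
    rw [h14, h2two.symm, ← Real.rpow_mul (by norm_num : (0:ℝ) ≤ 2),
      ← Real.rpow_mul (by norm_num : (0:ℝ) ≤ 2), ← Real.rpow_add two_pos,
      ← Real.rpow_add two_pos,
      show (2:ℝ) * (2:ℝ)^μ = (2:ℝ)^(1+μ) from by rw [Real.rpow_add two_pos, Real.rpow_one]]
    congr 1
    ring
  have e6 : (2:ℝ)^μ * (2:ℝ)^μ = (2:ℝ)^(2*μ) := by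
    rw [← Real.rpow_add two_pos]; congr 1; ring
  have main : ((2:ℝ)^(μ-1) * ((1:ℝ)/4) ^ (2*μ-1) * (4:ℝ) ^ (2*μ))
      * ((x*y) ^ (-μ+1/2) * (x*y) ^ (2*μ))
      * Real.Gamma (μ+1/2) ^ 2 * ((2:ℝ)^μ * Real.Gamma (μ+1))
      = 2 * (x*y) ^ (μ+1/2)
        * (Real.Gamma (μ+1/2) * Real.sqrt Real.pi * Real.Gamma (2*μ+1)) := by
    rw [e5, e4]
    linear_combination (2 * (x*y)^(μ+1/2) * Real.Gamma (μ+1/2) ^ 2 * Real.Gamma (μ+1)) * e6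
      - (2 * (x*y)^(μ+1/2) * Real.Gamma (μ+1/2)) * hdup'
  rw [e1]
  have hA4 : (0:ℝ) < (2:ℝ)^μ := Real.rpow_pos_of_pos two_pos μ
  field_simp [hG1.ne', hG2.ne', hG3.ne', hπ.ne', hA4.ne']
  rw [show (μ*2+1)/2 = μ+1/2 by ring, show (-(μ*2)+1)/2 = -μ+1/2 by ring,
    show μ*2 = 2*μ by ring, div_eq_iff hG3.ne']
  linear_combination ((x*y) ^ (-μ+1/2) * (x*y) ^ (2*μ) * (Real.Gamma (μ+1/2) * (2:ℝ)^μ * Real.Gamma (μ+1))) * e5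
    + (2 * (2:ℝ)^μ * (Real.Gamma (μ+1/2) * (2:ℝ)^μ * Real.Gamma (μ+1))) * e4
    + (2 * (x*y)^(μ+1/2) * Real.Gamma (μ+1/2) * Real.Gamma (μ+1)) * e6
    - (2 * (x*y)^(μ+1/2)) * hdup'

lemma Dker_nonneg {μ x y z : ℝ} (hμ : -(1/2:ℝ) < μ) (hx : 0 ≤ x) (hy : 0 ≤ y) (hz : 0 ≤ z) :
    0 ≤ Dker μ x y z := by
  rw [Dker]
  split
  · refine mul_nonneg (div_nonneg (mul_nonneg (Real.rpow_nonneg (by norm_num) _)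
      (Real.rpow_nonneg (by positivity) _))
      (mul_nonneg (Real.Gamma_pos_of_pos (by linarith)).le (Real.sqrt_nonneg _)))
      (Real.rpow_nonneg ?_ _)
    rw [triA]
    positivity
  · exact le_refl 0

lemma Dker_measurable (μ x : ℝ) : Measurable (fun yz : ℝ × ℝ => Dker μ x yz.1 yz.2) := by
  unfold Dker triA
  refine Measurable.ite ?_ ?_ measurable_const
  · have h1 : MeasurableSet {yz : ℝ×ℝ | |x - yz.1| < yz.2} :=
      measurableSet_lt (by fun_prop) (by fun_prop)
    have h2 : MeasurableSet {yz : ℝ×ℝ | yz.2 < x + yz.1} :=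
      measurableSet_lt (by fun_prop) (by fun_prop)
    exact h1.inter h2
  · fun_prop

set_option maxHeartbeats 1000000 in
/-- Young's inequality for the Hankel convolution: `L¹(sr) ♯ L^∞(r) ⊆ L^∞(r)`. -/
theorem stmt6 (μ : ℝ) (hμ : -(1/2 : ℝ) < μ)
    (r s : ℝ → ℝ) (cmu : ℝ)
    (hc : cmu = 2 ^ μ * Real.Gamma (μ + 1))
    (hr : ∀ x : ℝ, 0 < x → r x = x ^ (-μ - 1/2))
    (hs : ∀ x : ℝ, 0 < x → s x = x ^ (2 * μ + 1) / cmu)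
    (f g : ℝ → ℂ)
    (hfm : AEStronglyMeasurable f (volume.restrict (Ioi (0:ℝ))))
    (hgm : AEStronglyMeasurable g (volume.restrict (Ioi (0:ℝ))))
    (hf : IntegrableOn (fun x => ‖f x‖ * (s x * r x)) (Ioi (0:ℝ)))
    (M : ℝ) (hM : 0 ≤ M)
    (hg : ∀ᵐ x ∂(volume.restrict (Ioi (0:ℝ))), r x * ‖g x‖ ≤ M) :
    (∀ x : ℝ, 0 < x →
      Integrable (fun yz : ℝ × ℝ => ((Dker μ x yz.1 yz.2 : ℝ) : ℂ) * f yz.1 * g yz.2)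
        ((volume.restrict (Ioi (0:ℝ))).prod (volume.restrict (Ioi (0:ℝ))))) ∧
    (∀ x : ℝ, 0 < x →
      r x * ‖∫ yz in (Ioi (0:ℝ)) ×ˢ (Ioi (0:ℝ)),
          ((Dker μ x yz.1 yz.2 : ℝ) : ℂ) * f yz.1 * g yz.2‖ ≤
        (∫ y in Ioi (0:ℝ), ‖f y‖ * (s y * r y)) * M) := by
  set ν := volume.restrict (Ioi (0:ℝ)) with hν
  have hcpos : 0 < (2:ℝ)^μ * Real.Gamma (μ+1) :=
    mul_pos (Real.rpow_pos_of_pos two_pos μ) (Real.Gamma_pos_of_pos (by linarith))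
  have hg' : ∀ᵐ z ∂ν, ‖g z‖ ≤ M * z ^ (μ + 1/2) := by
    filter_upwards [hg, ae_restrict_mem measurableSet_Ioi] with z h1 h2
    have hz : (0:ℝ) < z := h2
    rw [hr z hz] at h1
    have hrpos : 0 < z ^ (-μ - 1/2) := Real.rpow_pos_of_pos hz _
    have h3 : ‖g z‖ ≤ M / z ^ (-μ-1/2) := by
      rw [le_div_iff₀ hrpos]
      calc ‖g z‖ * z ^ (-μ-1/2) = z ^ (-μ-1/2) * ‖g z‖ := by ring
        _ ≤ M := h1
    refine h3.trans (le_of_eq ?_)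
    rw [div_eq_mul_inv, ← Real.rpow_neg hz.le, show -(-μ-1/2) = μ+1/2 by ring]
  have hsr : ∀ y : ℝ, 0 < y → s y * r y = y ^ (μ+1/2) / ((2:ℝ)^μ * Real.Gamma (μ+1)) := by
    intro y hy
    rw [hs y hy, hr y hy, hc, div_mul_eq_mul_div, ← Real.rpow_add hy,
      show 2*μ+1 + (-μ-1/2) = μ+1/2 by ring]
  have key : ∀ x : ℝ, 0 < x →
      Integrable (fun yz : ℝ × ℝ => ((Dker μ x yz.1 yz.2 : ℝ) : ℂ) * f yz.1 * g yz.2)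
        (ν.prod ν) ∧
      r x * ‖∫ yz, ((Dker μ x yz.1 yz.2 : ℝ) : ℂ) * f yz.1 * g yz.2 ∂(ν.prod ν)‖ ≤
        (∫ y in Ioi (0:ℝ), ‖f y‖ * (s y * r y)) * M := by
    intro x hx
    have hDm : Measurable (fun yz : ℝ × ℝ => Dker μ x yz.1 yz.2) := Dker_measurable μ x
    have hmes : AEStronglyMeasurable
        (fun yz : ℝ × ℝ => ((Dker μ x yz.1 yz.2 : ℝ) : ℂ) * f yz.1 * g yz.2) (ν.prod ν) :=
      ((Complex.measurable_ofReal.comp hDm).aestronglyMeasurable.mul (hfm.comp_fst (ν := ν))).mul (hgm.comp_snd (μ := ν))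
    have hnormle : ∀ y : ℝ, 0 < y → ∀ᵐ z ∂ν,
        ‖((Dker μ x y z : ℝ) : ℂ) * f y * g z‖
          ≤ (M * ‖f y‖) * (z ^ (μ+1/2) * Dker μ x y z) := by
      intro y hy
      filter_upwards [hg', ae_restrict_mem measurableSet_Ioi] with z hz1 hz2
      have hz : (0:ℝ) < z := hz2
      have hD0 : 0 ≤ Dker μ x y z := Dker_nonneg hμ hx.le hy.le hz.le
      rw [norm_mul, norm_mul, Complex.norm_real, Real.norm_eq_abs, abs_of_nonneg hD0]
      calc Dker μ x y z * ‖f y‖ * ‖g z‖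
          ≤ Dker μ x y z * ‖f y‖ * (M * z ^ (μ+1/2)) :=
            mul_le_mul_of_nonneg_left hz1 (mul_nonneg hD0 (norm_nonneg _))
        _ = (M * ‖f y‖) * (z ^ (μ+1/2) * Dker μ x y z) := by ring
    have hslice : ∀ᵐ y ∂ν, Integrable (fun z => ((Dker μ x y z : ℝ) : ℂ) * f y * g z) ν := by
      filter_upwards [ae_restrict_mem measurableSet_Ioi] with y hy
      have hy' : (0:ℝ) < y := hy
      refine Integrable.mono' (((kerInt μ hμ x y hx hy').1.const_mul (M * ‖f y‖))) ?_
        (hnormle y hy')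
      exact (((Complex.measurable_ofReal.comp (hDm.comp measurable_prodMk_left
        )).aestronglyMeasurable.mul aestronglyMeasurable_const).mul hgm)
    have hinner : ∀ᵐ y ∂ν, (∫ z, ‖((Dker μ x y z : ℝ) : ℂ) * f y * g z‖ ∂ν)
        ≤ ‖f y‖ * (M * ((x*y) ^ (μ+1/2) / ((2:ℝ)^μ * Real.Gamma (μ+1)))) := by
      filter_upwards [ae_restrict_mem measurableSet_Ioi] with y hy
      have hy' : (0:ℝ) < y := hy
      calc (∫ z, ‖((Dker μ x y z : ℝ) : ℂ) * f y * g z‖ ∂ν)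
          ≤ ∫ z, (M * ‖f y‖) * (z ^ (μ+1/2) * Dker μ x y z) ∂ν :=
            integral_mono_of_nonneg (Filter.Eventually.of_forall fun z => norm_nonneg _)
              ((kerInt μ hμ x y hx hy').1.const_mul _) (hnormle y hy')
        _ = (M * ‖f y‖) * ((x*y) ^ (μ+1/2) / ((2:ℝ)^μ * Real.Gamma (μ+1))) := by
            rw [MeasureTheory.integral_const_mul, (kerInt μ hμ x y hx hy').2]
        _ = ‖f y‖ * (M * ((x*y) ^ (μ+1/2) / ((2:ℝ)^μ * Real.Gamma (μ+1)))) := by ring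
    have hre : (fun y => (M * x ^ (μ+1/2)) * (‖f y‖ * (s y * r y)))
        =ᵐ[ν] fun y => ‖f y‖ * (M * ((x*y) ^ (μ+1/2) / ((2:ℝ)^μ * Real.Gamma (μ+1)))) := by
      filter_upwards [ae_restrict_mem measurableSet_Ioi] with y hy
      have hy' : (0:ℝ) < y := hy
      rw [hsr y hy', Real.mul_rpow hx.le hy'.le]
      field_simp
    have hRHSint : Integrable
        (fun y => ‖f y‖ * (M * ((x*y) ^ (μ+1/2) / ((2:ℝ)^μ * Real.Gamma (μ+1))))) ν :=
      (hf.const_mul (M * x ^ (μ+1/2))).congr hre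
    have hdom : Integrable
        (fun y => ∫ z, ‖((Dker μ x y z : ℝ) : ℂ) * f y * g z‖ ∂ν) ν := by
      refine Integrable.mono' hRHSint (hmes.norm.integral_prod_right') ?_
      filter_upwards [hinner] with y h1
      rw [Real.norm_eq_abs, abs_of_nonneg (integral_nonneg fun z => norm_nonneg _)]
      exact h1
    have hInt : Integrable
        (fun yz : ℝ × ℝ => ((Dker μ x yz.1 yz.2 : ℝ) : ℂ) * f yz.1 * g yz.2) (ν.prod ν) :=
      (integrable_prod_iff hmes).mpr ⟨hslice, hdom⟩
    refine ⟨hInt, ?_⟩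
    have hrx : (0:ℝ) < r x := by rw [hr x hx]; positivity
    have hb1 : ‖∫ yz, ((Dker μ x yz.1 yz.2 : ℝ) : ℂ) * f yz.1 * g yz.2 ∂(ν.prod ν)‖
        ≤ ∫ y, (∫ z, ‖((Dker μ x y z : ℝ) : ℂ) * f y * g z‖ ∂ν) ∂ν := by
      refine (norm_integral_le_integral_norm _).trans (le_of_eq ?_)
      exact integral_prod _ hInt.norm
    have hb2 : (∫ y, (∫ z, ‖((Dker μ x y z : ℝ) : ℂ) * f y * g z‖ ∂ν) ∂ν)
        ≤ ∫ y, ‖f y‖ * (M * ((x*y) ^ (μ+1/2) / ((2:ℝ)^μ * Real.Gamma (μ+1)))) ∂ν :=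
      integral_mono_of_nonneg
        (Filter.Eventually.of_forall fun y => integral_nonneg fun z => norm_nonneg _)
        hRHSint hinner
    have hb3 : (∫ y, ‖f y‖ * (M * ((x*y) ^ (μ+1/2) / ((2:ℝ)^μ * Real.Gamma (μ+1)))) ∂ν)
        = (M * x ^ (μ+1/2)) * ∫ y in Ioi (0:ℝ), ‖f y‖ * (s y * r y) := by
      rw [← integral_congr_ae hre, MeasureTheory.integral_const_mul]
    have hfin : r x * ((M * x ^ (μ+1/2)) * ∫ y in Ioi (0:ℝ), ‖f y‖ * (s y * r y))
        = (∫ y in Ioi (0:ℝ), ‖f y‖ * (s y * r y)) * M := by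
      rw [hr x hx]
      rw [show x ^ (-μ-1/2) * (M * x ^ (μ+1/2) * ∫ y in Ioi (0:ℝ), ‖f y‖ * (s y * r y))
        = (x ^ (-μ-1/2) * x ^ (μ+1/2)) * M * ∫ y in Ioi (0:ℝ), ‖f y‖ * (s y * r y) by ring,
        ← Real.rpow_add hx, show -μ-1/2 + (μ+1/2) = 0 by ring, Real.rpow_zero]
      ring
    calc r x * ‖∫ yz, ((Dker μ x yz.1 yz.2 : ℝ) : ℂ) * f yz.1 * g yz.2 ∂(ν.prod ν)‖
        ≤ r x * ((M * x ^ (μ+1/2)) * ∫ y in Ioi (0:ℝ), ‖f y‖ * (s y * r y)) := by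
          refine mul_le_mul_of_nonneg_left ((hb1.trans hb2).trans (le_of_eq hb3)) hrx.le
      _ = (∫ y in Ioi (0:ℝ), ‖f y‖ * (s y * r y)) * M := hfin
  have hmeq : (volume : Measure (ℝ×ℝ)).restrict ((Ioi (0:ℝ)) ×ˢ (Ioi (0:ℝ))) = ν.prod ν := by
    rw [hν, Measure.prod_restrict, ← Measure.volume_eq_prod]
  refine ⟨fun x hx => (key x hx).1, fun x hx => ?_⟩
  have h2 := (key x hx).2
  rw [← hmeq] at h2
  exact h2
end
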